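/- Let V, W be finite-dimensional real normed vector spaces, r : V → W a surjective linear map, α : W → ℝ locally Lipschitz, and σ = α ∘ r. Then for every c ∈ V, the Clarke subdifferential satisfies ∂σ(c) = r*(∂α(r c)), where r* : W* → V* is the adjoint of r. -/
import Mathlib


open Filter

/-- The Clarke generalized directional derivative of `f` at `x` in direction `v`. -/
noncomputable def clarkeDeriv {V : Type*} [NormedAddCommGroup V] [NormedSpace ℝ V]
    (f : V → ℝ) (x v : V) : ℝ :=
  Filter.limsup (fun p : V × ℝ => (f (p.1 + p.2 • v) - f p.1) / p.2)
    ((nhds x) ×ˢ (nhdsWithin 0 (Set.Ioi 0)))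

/-- The Clarke subdifferential of `f` at `x`: all linear functionals dominated by the
Clarke generalized directional derivative `f°(x, ·)`. -/
def clarkeSubdiff {V : Type*} [NormedAddCommGroup V] [NormedSpace ℝ V]
    (f : V → ℝ) (x : V) : Set (V →ₗ[ℝ] ℝ) :=
  {g | ∀ v : V, g v ≤ clarkeDeriv f x v}

lemma clarkeDeriv_comp {V W : Type*} [NormedAddCommGroup V] [NormedSpace ℝ V]
    [FiniteDimensional ℝ V] [NormedAddCommGroup W] [NormedSpace ℝ W]
    [FiniteDimensional ℝ W] (r : V →ₗ[ℝ] W) (hr : Function.Surjective r)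
    (α : W → ℝ) (c v : V) :
    clarkeDeriv (α ∘ r) c v = clarkeDeriv α (r c) (r v) := by
  have hc : Continuous r := r.continuous_of_finiteDimensional
  have hopen : IsOpenMap r :=
    ContinuousLinearMap.isOpenMap (LinearMap.toContinuousLinearMap r) hr
  have hmap : Filter.map r (nhds c) = nhds (r c) :=
    le_antisymm (hc.continuousAt) (hopen.nhds_le c)
  have hfun : (fun p : V × ℝ => ((α ∘ r) (p.1 + p.2 • v) - (α ∘ r) p.1) / p.2)
      = (fun q : W × ℝ => (α (q.1 + q.2 • r v) - α q.1) / q.2) ∘ (Prod.map r id) := by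
    ext p
    simp [Function.comp, map_add, map_smul]
  unfold clarkeDeriv
  rw [hfun, Filter.limsup_comp, ← Filter.prod_map_left, hmap]

lemma clarkeDeriv_zero {V : Type*} [NormedAddCommGroup V] [NormedSpace ℝ V]
    (f : V → ℝ) (x : V) : clarkeDeriv f x 0 = 0 := by
  unfold clarkeDeriv
  have : (fun p : V × ℝ => (f (p.1 + p.2 • (0 : V)) - f p.1) / p.2) = fun _ => (0 : ℝ) := by
    ext p; simp
  rw [this]
  have : ((nhds x) ×ˢ (nhdsWithin (0 : ℝ) (Set.Ioi 0))).NeBot := by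
    have : (nhdsWithin (0 : ℝ) (Set.Ioi 0)).NeBot := nhdsGT_neBot 0
    infer_instance
  exact limsup_const 0

/-- For a surjective linear map `r : V → W` and locally Lipschitz `α : W → ℝ`,
the Clarke subdifferential of `σ = α ∘ r` satisfies `∂σ(c) = r*(∂α(r c))`. -/
theorem stmt1 {V W : Type*} [NormedAddCommGroup V] [NormedSpace ℝ V] [FiniteDimensional ℝ V]
    [NormedAddCommGroup W] [NormedSpace ℝ W] [FiniteDimensional ℝ W]
    (r : V →ₗ[ℝ] W) (hr : Function.Surjective r) (α : W → ℝ) (hα : LocallyLipschitz α)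
    (c : V) :
    clarkeSubdiff (α ∘ r) c = (fun g : W →ₗ[ℝ] ℝ => g.comp r) '' clarkeSubdiff α (r c) := by
  ext h
  constructor
  · intro hh
    -- h vanishes on ker r
    have hker : ∀ v : V, r v = 0 → h v = 0 := by
      intro v hv
      have h1 : h v ≤ clarkeDeriv (α ∘ r) c v := hh v
      have h2 : h (-v) ≤ clarkeDeriv (α ∘ r) c (-v) := hh (-v)
      rw [clarkeDeriv_comp r hr, hv, clarkeDeriv_zero] at h1
      rw [clarkeDeriv_comp r hr, map_neg r, map_neg h, hv, neg_zero, clarkeDeriv_zero] at h2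
      linarith
    -- section of r
    obtain ⟨s, hs⟩ := r.exists_rightInverse_of_surjective (LinearMap.range_eq_top.mpr hr)
    refine ⟨h.comp s, ?_, ?_⟩
    · intro w
      obtain ⟨v, rfl⟩ := hr w
      have hsv : h (s (r v)) = h v := by
        have : r (s (r v) - v) = 0 := by
          have := LinearMap.congr_fun hs (r v)
          simp only [LinearMap.coe_comp, Function.comp_apply, LinearMap.id_apply] at this
          simp [map_sub, this]
        have h0 := hker _ this
        rw [map_sub, sub_eq_zero] at h0
        exact h0
      have := hh v
      rw [clarkeDeriv_comp r hr] at this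
      simpa [hsv] using this
    · ext v
      obtain ⟨w, hw⟩ : ∃ w, s (r v) - v = w := ⟨_, rfl⟩
      have hrw : r (s (r v) - v) = 0 := by
        have := LinearMap.congr_fun hs (r v)
        simp only [LinearMap.coe_comp, Function.comp_apply, LinearMap.id_apply] at this
        simp [map_sub, this]
      have h0 := hker _ hrw
      rw [map_sub, sub_eq_zero] at h0
      simpa using h0
  · rintro ⟨g, hg, rfl⟩
    intro v
    rw [clarkeDeriv_comp r hr]
    exact hg (r v)
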